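/- Let a, b, C11 be real and C12 complex with C11 > |C12| > 0 and a > 0. The eigenvalues of the weighted quasiperiodic capacitance matrix C^{v,α} = diag(a+ib, a-ib)·[[C11, C12],[conj(C12), C11]] are λ_± = a·C11 ± sqrt(a²|C12|² - b²(C11² - |C12|²)), and they are both real if and only if |b| ≤ a·|C12|/sqrt(C11² - |C12|²). -/

import Mathlib

open Matrix Complex

noncomputable def CvAlpha (a b C11 : ℝ) (C12 : ℂ) : Matrix (Fin 2) (Fin 2) ℂ :=
  !![((a : ℂ) + Complex.I * b) * (C11 : ℂ), ((a : ℂ) + Complex.I * b) * C12;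
     ((a : ℂ) - Complex.I * b) * starRingEnd ℂ C12, ((a : ℂ) - Complex.I * b) * (C11 : ℂ)]

theorem stmt5 (a b C11 : ℝ) (C12 : ℂ) (ha : 0 < a)
    (hC12 : 0 < ‖C12‖) (h11 : ‖C12‖ < C11)
    (s : ℂ)
    (hs : s ^ 2 = ((a ^ 2 * (‖C12‖) ^ 2
        - b ^ 2 * (C11 ^ 2 - (‖C12‖) ^ 2) : ℝ) : ℂ)) :
    (∀ lam : ℂ,
      (CvAlpha a b C11 C12 - lam • (1 : Matrix (Fin 2) (Fin 2) ℂ)).det = 0 ↔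
        lam = ((a * C11 : ℝ) : ℂ) + s ∨ lam = ((a * C11 : ℝ) : ℂ) - s) ∧
    ((∀ lam : ℂ,
        (CvAlpha a b C11 C12 - lam • (1 : Matrix (Fin 2) (Fin 2) ℂ)).det = 0 → lam.im = 0) ↔
      |b| ≤ a * ‖C12‖ / Real.sqrt (C11 ^ 2 - (‖C12‖) ^ 2)) := by
  set r : ℝ := ‖C12‖ with hr
  have hconj : C12 * starRingEnd ℂ C12 = ((r ^ 2 : ℝ) : ℂ) := by
    rw [Complex.mul_conj]
    push_cast [hr, Complex.sq_norm]
    rfl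
  have key : ∀ lam : ℂ, (CvAlpha a b C11 C12 - lam • (1 : Matrix (Fin 2) (Fin 2) ℂ)).det
      = (((a * C11 : ℝ) : ℂ) + s - lam) * (((a * C11 : ℝ) : ℂ) - s - lam) := by
    intro lam
    simp [CvAlpha, Matrix.det_fin_two, Matrix.one_apply]
    have : (((a : ℂ) + Complex.I * b) * C12) * (((a : ℂ) - Complex.I * b) * starRingEnd ℂ C12)
        = ((a:ℂ)^2 + (b:ℂ)^2) * ((r ^ 2 : ℝ) : ℂ) := by
      have h2 : ((a : ℂ) + Complex.I * b) * ((a : ℂ) - Complex.I * b)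
          = (a:ℂ)^2 + (b:ℂ)^2 := by
        have := Complex.I_sq
        ring_nf
        rw [Complex.I_sq]
        ring
      calc (((a : ℂ) + Complex.I * b) * C12) * (((a : ℂ) - Complex.I * b) * starRingEnd ℂ C12)
          = (((a : ℂ) + Complex.I * b) * ((a : ℂ) - Complex.I * b)) * (C12 * starRingEnd ℂ C12) := by ring
        _ = ((a:ℂ)^2 + (b:ℂ)^2) * ((r ^ 2 : ℝ) : ℂ) := by rw [h2, hconj]
    have hIsq := Complex.I_sq
    push_cast at hs this ⊢
    linear_combination (-1:ℂ) * this + hs + (-(b:ℂ)^2 * (C11:ℂ)^2) * hIsq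
  have part1 : ∀ lam : ℂ, (CvAlpha a b C11 C12 - lam • (1 : Matrix (Fin 2) (Fin 2) ℂ)).det = 0 ↔
      lam = ((a * C11 : ℝ) : ℂ) + s ∨ lam = ((a * C11 : ℝ) : ℂ) - s := by
    intro lam
    rw [key lam, mul_eq_zero, sub_eq_zero, sub_eq_zero]
    tauto
  refine ⟨part1, ?_⟩
  have ht2 : (0:ℝ) < C11 ^ 2 - r ^ 2 := by nlinarith
  have ht : 0 < Real.sqrt (C11 ^ 2 - r ^ 2) := Real.sqrt_pos.mpr ht2
  have htsq : Real.sqrt (C11 ^ 2 - r ^ 2) ^ 2 = C11 ^ 2 - r ^ 2 := Real.sq_sqrt ht2.le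
  have hiff : (0 ≤ a ^ 2 * r ^ 2 - b ^ 2 * (C11 ^ 2 - r ^ 2)) ↔
      |b| ≤ a * r / Real.sqrt (C11 ^ 2 - r ^ 2) := by
    rw [le_div_iff₀ ht]
    constructor
    · intro h
      refine le_of_pow_le_pow_left₀ (two_ne_zero) (by positivity) ?_
      have e : (|b| * Real.sqrt (C11 ^ 2 - r ^ 2)) ^ 2 = b ^ 2 * (C11 ^ 2 - r ^ 2) := by
        rw [mul_pow, _root_.sq_abs, htsq]
      rw [e]; nlinarith
    · intro h
      have h1 : (|b| * Real.sqrt (C11 ^ 2 - r ^ 2)) ^ 2 ≤ (a * r) ^ 2 :=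
        pow_le_pow_left₀ (by positivity) h 2
      have e : (|b| * Real.sqrt (C11 ^ 2 - r ^ 2)) ^ 2 = b ^ 2 * (C11 ^ 2 - r ^ 2) := by
        rw [mul_pow, _root_.sq_abs, htsq]
      rw [e] at h1; nlinarith
  constructor
  · intro hAll
    have h1 : (((a * C11 : ℝ) : ℂ) + s).im = 0 := hAll _ ((part1 _).mpr (Or.inl rfl))
    have hsim : s.im = 0 := by simpa using h1
    have hsr : ((s.re : ℝ) : ℂ) = s := Complex.ext (by simp) (by simp [hsim])
    have h2 : ((a ^ 2 * r ^ 2 - b ^ 2 * (C11 ^ 2 - r ^ 2) : ℝ) : ℂ) = ((s.re ^ 2 : ℝ) : ℂ) := by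
      rw [← hs, ← hsr]; push_cast; simp
    have hD : a ^ 2 * r ^ 2 - b ^ 2 * (C11 ^ 2 - r ^ 2) = s.re ^ 2 :=
      Complex.ofReal_injective h2
    exact hiff.mp (hD ▸ sq_nonneg _)
  · intro hb lam hdet
    have hD0 : 0 ≤ a ^ 2 * r ^ 2 - b ^ 2 * (C11 ^ 2 - r ^ 2) := hiff.mpr hb
    have h3 : (s ^ 2).im = 0 := by rw [hs]; exact Complex.ofReal_im _
    have h4 : (s ^ 2).re = a ^ 2 * r ^ 2 - b ^ 2 * (C11 ^ 2 - r ^ 2) := by rw [hs]; exact Complex.ofReal_re _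
    have him : s.im = 0 := by
      simp only [sq, Complex.mul_im] at h3
      have h5 : s.re * s.im = 0 := by linarith
      rcases mul_eq_zero.mp h5 with h | h
      · simp only [sq, Complex.mul_re, h] at h4; nlinarith [sq_nonneg s.im]
      · exact h
    rcases (part1 lam).mp hdet with h | h <;> subst h <;> simp [him]
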